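/- Let G(r) = Σ_{n≥0} a_n r^n be a power series with non-negative coefficients, let r ≥ 1 be in the domain where all quantities considered are defined, and suppose F_k(r) = Σ_{j=0}^k f_{j,k} r^{k+j-1} G^{(j)}(r) with f_{j,k} as in the standard recursion (f_{0,k}=k!, f_{k,k}=1, f_{j,k+1}=f_{j-1,k}+(k+j+1)f_{j,k}) and F_k(r) = k! r^{k-1} I^(k)(r) for some non-negative quantities I^(k)(r). Then: G^{(k)}(r)/k! grows at most exponentially in k (i.e., there exist c₁ ≥ 0 and C₁ > 1 with G^{(k)}(r)/k! ≤ c₁C₁^k for all k) if and only if I^(k)(r) grows at most exponentially in k. -/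

import Mathlib

/-- The coefficients `f_{j,k}` (for `0 ≤ j ≤ k`, and `0` out of range), defined by
`f_{0,k} = k!`, `f_{k,k} = 1` and `f_{j,k+1} = f_{j-1,k} + (k+j+1) f_{j,k}` for `1 ≤ j ≤ k`. -/
def fCoeff : ℕ → ℕ → ℕ
  | 0, k => Nat.factorial k
  | _ + 1, 0 => 0
  | j + 1, k + 1 =>
      if j + 1 ≤ k then fCoeff j k + (k + j + 2) * fCoeff (j + 1) k
      else if j = k then 1 else 0

lemma fCoeff_self (k : ℕ) : fCoeff k k = 1 := by
  cases k with
  | zero => simp [fCoeff]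
  | succ n => simp [fCoeff]

lemma fCoeff_mul_factorial_le (k : ℕ) :
    ∀ j, fCoeff j k * Nat.factorial j ≤ 4 ^ k * Nat.factorial k := by
  induction k with
  | zero =>
    intro j
    match j with
    | 0 => simp [fCoeff]
    | j + 1 => simp [fCoeff]
  | succ k ih =>
    intro j
    match j with
    | 0 =>
      simpa [fCoeff] using Nat.le_mul_of_pos_left _ (by positivity)
    | j + 1 =>
      rw [fCoeff]
      split
      · rename_i hjk
        have h1 := ih j
        have h2 := ih (j + 1)
        rw [Nat.factorial_succ] at h2
        rw [Nat.factorial_succ j, Nat.factorial_succ k, pow_succ]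
        calc (fCoeff j k + (k + j + 2) * fCoeff (j + 1) k) * ((j + 1) * Nat.factorial j)
            = (j + 1) * (fCoeff j k * Nat.factorial j)
              + (k + j + 2) * (fCoeff (j + 1) k * ((j + 1) * Nat.factorial j)) := by ring
          _ ≤ (j + 1) * (4 ^ k * Nat.factorial k)
              + (k + j + 2) * (4 ^ k * Nat.factorial k) := by gcongr
          _ = (k + 2 * j + 3) * (4 ^ k * Nat.factorial k) := by ring
          _ ≤ (4 * (k + 1)) * (4 ^ k * Nat.factorial k) := by
              have : k + 2 * j + 3 ≤ 4 * (k + 1) := by omega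
              exact Nat.mul_le_mul_right _ this
          _ = 4 ^ k * 4 * ((k + 1) * Nat.factorial k) := by ring
      · split
        · rename_i h
          subst h
          simpa using Nat.le_mul_of_pos_left _ (by positivity)
        · simp

/-- Suppose `Gd j ≥ 0` plays the role of `G^{(j)}(r)` for a power series with non-negative
coefficients, `r ≥ 1`, `F k = Σ_{j=0}^k f_{j,k} r^{k+j-1} Gd j` and
`F k = k! r^{k-1} I k` for non-negative quantities `I k` (for every `k ≥ 1`).
Then `Gd k / k!` grows at most exponentially in `k` iff `I k` does. -/
theorem derivatives_subexponential_iff (r : ℝ) (hr : 1 ≤ r)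
    (Gd I F : ℕ → ℝ) (hGd : ∀ j, 0 ≤ Gd j) (hI : ∀ k, 0 ≤ I k)
    (hF : ∀ k, 1 ≤ k →
      F k = ∑ j ∈ Finset.range (k + 1), (fCoeff j k : ℝ) * r ^ (k + j - 1) * Gd j)
    (hFI : ∀ k, 1 ≤ k → F k = (Nat.factorial k : ℝ) * r ^ (k - 1) * I k) :
    (∃ c₁ C₁ : ℝ, 0 ≤ c₁ ∧ 1 < C₁ ∧ ∀ k : ℕ, Gd k / (Nat.factorial k : ℝ) ≤ c₁ * C₁ ^ k) ↔
    (∃ c₂ C₂ : ℝ, 0 ≤ c₂ ∧ 1 < C₂ ∧ ∀ k : ℕ, I k ≤ c₂ * C₂ ^ k) := by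
  have hr0 : (0 : ℝ) < r := lt_of_lt_of_le one_pos hr
  constructor
  · rintro ⟨c₁, C₁, hc₁, hC₁, h⟩
    have hC₁0 : (0 : ℝ) < C₁ := lt_trans one_pos hC₁
    have hGj : ∀ j, Gd j ≤ c₁ * C₁ ^ j * Nat.factorial j := by
      intro j
      have hj := h j
      rw [div_le_iff₀ (Nat.cast_pos.mpr (Nat.factorial_pos j))] at hj
      exact hj
    have main : ∀ k : ℕ, 1 ≤ k → I k ≤ c₁ * (8 * r * C₁) ^ k := by
      intro k hk1
      have hfac : (0 : ℝ) < (Nat.factorial k : ℝ) := Nat.cast_pos.mpr (Nat.factorial_pos k)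
      have hFle : F k ≤ ((k : ℝ) + 1) *
          ((4 : ℝ) ^ k * Nat.factorial k * r ^ (2 * k - 1) * (c₁ * C₁ ^ k)) := by
        rw [hF k hk1]
        have hterm : ∀ j ∈ Finset.range (k + 1),
            (fCoeff j k : ℝ) * r ^ (k + j - 1) * Gd j
              ≤ (4 : ℝ) ^ k * Nat.factorial k * r ^ (2 * k - 1) * (c₁ * C₁ ^ k) := by
          intro j hj
          rw [Finset.mem_range] at hj
          have hjk : j ≤ k := Nat.lt_succ_iff.mp hj
          calc (fCoeff j k : ℝ) * r ^ (k + j - 1) * Gd j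
              ≤ (fCoeff j k : ℝ) * r ^ (k + j - 1) * (c₁ * C₁ ^ j * Nat.factorial j) :=
                mul_le_mul_of_nonneg_left (hGj j) (by positivity)
            _ = ((fCoeff j k : ℝ) * (Nat.factorial j : ℝ)) * r ^ (k + j - 1)
                  * (c₁ * C₁ ^ j) := by ring
            _ ≤ ((4 : ℝ) ^ k * (Nat.factorial k : ℝ)) * r ^ (2 * k - 1)
                  * (c₁ * C₁ ^ k) := by
                gcongr ?_ * ?_ * (c₁ * ?_)
                · have := fCoeff_mul_factorial_le k j
                  calc (fCoeff j k : ℝ) * (Nat.factorial j : ℝ)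
                      = ((fCoeff j k * Nat.factorial j : ℕ) : ℝ) := by push_cast; ring
                    _ ≤ ((4 ^ k * Nat.factorial k : ℕ) : ℝ) := by exact_mod_cast this
                    _ = (4 : ℝ) ^ k * (Nat.factorial k : ℝ) := by push_cast; ring
                · exact pow_le_pow_right₀ hr (by omega)
                · exact pow_le_pow_right₀ (le_of_lt hC₁) hjk
        calc (∑ j ∈ Finset.range (k + 1), (fCoeff j k : ℝ) * r ^ (k + j - 1) * Gd j)
            ≤ ∑ _j ∈ Finset.range (k + 1),
                (4 : ℝ) ^ k * Nat.factorial k * r ^ (2 * k - 1) * (c₁ * C₁ ^ k) :=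
              Finset.sum_le_sum hterm
          _ = ((k : ℝ) + 1) *
              ((4 : ℝ) ^ k * Nat.factorial k * r ^ (2 * k - 1) * (c₁ * C₁ ^ k)) := by
              rw [Finset.sum_const, Finset.card_range, nsmul_eq_mul]
              push_cast; ring
      have hIk : I k ≤ c₁ * ((k : ℝ) + 1) * (4 * r * C₁) ^ k := by
        have hP : (0 : ℝ) < (Nat.factorial k : ℝ) * r ^ (k - 1) :=
          mul_pos hfac (pow_pos hr0 _)
        refine le_of_mul_le_mul_left ?_ hP
        calc (Nat.factorial k : ℝ) * r ^ (k - 1) * I k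
            ≤ ((k : ℝ) + 1) *
              ((4 : ℝ) ^ k * Nat.factorial k * r ^ (2 * k - 1) * (c₁ * C₁ ^ k)) := by
              rw [← hFI k hk1]; exact hFle
          _ = (Nat.factorial k : ℝ) * r ^ (k - 1)
                * (c₁ * ((k : ℝ) + 1) * (4 * r * C₁) ^ k) := by
              rw [show 2 * k - 1 = (k - 1) + k from by omega, pow_add, mul_pow, mul_pow]
              ring
      have h2k : ((k : ℝ) + 1) ≤ 2 ^ k := by
        have := Nat.lt_two_pow_self (n := k)
        exact_mod_cast Nat.succ_le_of_lt this
      calc I k ≤ c₁ * ((k : ℝ) + 1) * (4 * r * C₁) ^ k := hIk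
        _ ≤ c₁ * 2 ^ k * (4 * r * C₁) ^ k := by gcongr
        _ = c₁ * (8 * r * C₁) ^ k := by
            rw [mul_assoc, ← mul_pow]
            congr 2
            ring
    refine ⟨c₁ + I 0, 8 * r * C₁, add_nonneg hc₁ (hI 0), by nlinarith, ?_⟩
    intro k
    cases k with
    | zero =>
      simp only [pow_zero, mul_one]
      linarith [hI 0]
    | succ n =>
      have hpow : (0 : ℝ) ≤ (8 * r * C₁) ^ (n + 1) :=
        le_of_lt (pow_pos (mul_pos (mul_pos (by norm_num) hr0) hC₁0) _)
      calc I (n + 1) ≤ c₁ * (8 * r * C₁) ^ (n + 1) := main _ (Nat.succ_le_succ (Nat.zero_le n))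
        _ ≤ (c₁ + I 0) * (8 * r * C₁) ^ (n + 1) := by
            have := hI 0
            nlinarith
  · rintro ⟨c₂, C₂, hc₂, hC₂, h⟩
    have main : ∀ k : ℕ, 1 ≤ k → Gd k ≤ (Nat.factorial k : ℝ) * I k := by
      intro k hk1
      have hsum : r ^ (k + k - 1) * Gd k ≤ F k := by
        rw [hF k hk1]
        have := Finset.single_le_sum
          (f := fun j => (fCoeff j k : ℝ) * r ^ (k + j - 1) * Gd j)
          (fun j _ => mul_nonneg (mul_nonneg (Nat.cast_nonneg _) (pow_nonneg hr0.le _)) (hGd j))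
          (Finset.self_mem_range_succ k)
        simpa [fCoeff_self] using this
      rw [hFI k hk1] at hsum
      have hP : (0 : ℝ) < r ^ (k - 1) := pow_pos hr0 _
      refine le_of_mul_le_mul_left ?_ hP
      calc r ^ (k - 1) * Gd k
          ≤ r ^ (k + k - 1) * Gd k := by
            exact mul_le_mul_of_nonneg_right (pow_le_pow_right₀ hr (by omega)) (hGd k)
        _ ≤ (Nat.factorial k : ℝ) * r ^ (k - 1) * I k := hsum
        _ = r ^ (k - 1) * ((Nat.factorial k : ℝ) * I k) := by ring
    refine ⟨c₂ + Gd 0, C₂, add_nonneg hc₂ (hGd 0), hC₂, ?_⟩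
    intro k
    cases k with
    | zero =>
      simp only [Nat.factorial, Nat.cast_one, div_one, pow_zero, mul_one]
      linarith [hGd 0]
    | succ n =>
      have hk1 : 1 ≤ n + 1 := Nat.succ_le_succ (Nat.zero_le n)
      have hfac : (0 : ℝ) < (Nat.factorial (n + 1) : ℝ) :=
        Nat.cast_pos.mpr (Nat.factorial_pos _)
      rw [div_le_iff₀ hfac]
      have hCpow : (0 : ℝ) ≤ C₂ ^ (n + 1) := by positivity
      calc Gd (n + 1) ≤ (Nat.factorial (n + 1) : ℝ) * I (n + 1) := main _ hk1
        _ ≤ (Nat.factorial (n + 1) : ℝ) * (c₂ * C₂ ^ (n + 1)) := by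
            exact mul_le_mul_of_nonneg_left (h _) (le_of_lt hfac)
        _ ≤ ((c₂ + Gd 0) * C₂ ^ (n + 1)) * (Nat.factorial (n + 1) : ℝ) := by
            nlinarith [mul_nonneg (mul_nonneg (hGd 0) hCpow) hfac.le]
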